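/- For every integer k ≥ 1 and every integer n ≥ 2, g_{k−1}(n) − f_{k−1}(n) = f_{−k}(n) + p(n, k−1) − g'_{−k}(n). -/

import Mathlib

/-- `l` is a partition of `n`: a nonincreasing list of positive integers summing to `n`. -/
noncomputable def IsPartitionOf (n : ℕ) (l : List ℕ) : Prop :=
  l.Pairwise (· ≥ ·) ∧ (∀ x ∈ l, 0 < x) ∧ l.sum = n

/-- The partition `l` has a `k`-fixed point: `λ_i = i + k` for some (1-indexed) index `i`. -/
noncomputable def HasKFixedPoint (k : ℤ) (l : List ℕ) : Prop :=
  ∃ i : Fin l.length, (l.get i : ℤ) = (i.val : ℤ) + 1 + k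

/-- `f_k(n)`: the number of partitions of `n` with a `k`-fixed point. -/
noncomputable def fk (k : ℤ) (n : ℕ) : ℕ :=
  {l : List ℕ | IsPartitionOf n l ∧ HasKFixedPoint k l}.ncard

/-- `g_k(n)`: the number of partitions of `n` without a `k`-fixed point. -/
noncomputable def gk (k : ℤ) (n : ℕ) : ℕ :=
  {l : List ℕ | IsPartitionOf n l ∧ ¬ HasKFixedPoint k l}.ncard

/-- `mex_j(l)`: the smallest integer greater than `j` that is not a part of `l`. -/
noncomputable def mexJ (j : ℕ) (l : List ℕ) : ℕ := sInf {m : ℕ | j < m ∧ m ∉ l}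

/-- Dyson's crank of a partition. -/
noncomputable def crank (l : List ℕ) : ℤ :=
  if l.count 1 = 0 then (l.headI : ℤ)
  else ((l.filter (fun x => l.count 1 < x)).length : ℤ) - (l.count 1 : ℤ)

/-- `M(m,n)`: the number of partitions of `n` with crank `m`. -/
noncomputable def M (m : ℤ) (n : ℕ) : ℕ :=
  {l : List ℕ | IsPartitionOf n l ∧ crank l = m}.ncard

/-- `p(n)`: the number of partitions of `n`. -/
noncomputable def partitionCount (n : ℕ) : ℕ := {l : List ℕ | IsPartitionOf n l}.ncard

/-- `p(n,j)`: the number of partitions of `n` into at most `j` parts. -/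
noncomputable def pAtMost (n : ℕ) (j : ℤ) : ℕ :=
  {l : List ℕ | IsPartitionOf n l ∧ (l.length : ℤ) ≤ j}.ncard

/-- `g'_{-k}(n)`: partitions of `n` with at least `k` parts and no `-k`-fixed point. -/
noncomputable def gneg (k : ℕ) (n : ℕ) : ℕ :=
  {l : List ℕ | IsPartitionOf n l ∧ k ≤ l.length ∧
    ∀ i : Fin l.length, (l.get i : ℤ) ≠ (i.val : ℤ) + 1 - k}.ncard

/-- `(q;q)_i = ∏_{m=1}^{i} (1 - q^m)` as a formal power series over `ℤ`. -/
noncomputable def qPoch (i : ℕ) : PowerSeries ℤ :=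
  ∏ m ∈ Finset.range i, (1 - PowerSeries.X ^ (m + 1))

/-! ### Auxiliary development: conjugation of partitions -/

/-- The conjugate partition. -/
def conj (l : List ℕ) : List ℕ :=
  (List.range l.headI).map (fun j => l.countP (fun x => decide (j < x)))

lemma sorted_getElem_le {l : List ℕ} (hs : l.Pairwise (· ≥ ·)) {i j : ℕ} (hij : i ≤ j)
    (hj : j < l.length) : l[j] ≤ l[i]'(lt_of_le_of_lt hij hj) :=
  hs.rel_get_of_le (a := ⟨i, lt_of_le_of_lt hij hj⟩) (b := ⟨j, hj⟩) hij

lemma lemK {l : List ℕ} (hs : l.Pairwise (· ≥ ·)) {i : ℕ} (hi : i < l.length) (v : ℕ) :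
    i < l.countP (fun x => decide (v < x)) ↔ v < l[i] := by
  constructor
  · intro h
    by_contra hc
    push_neg at hc
    have hdrop : (l.drop i).countP (fun x => decide (v < x)) = 0 := by
      rw [List.countP_eq_zero]
      intro a ha
      obtain ⟨j, hj, rfl⟩ := List.mem_iff_getElem.mp ha
      rw [← List.getElem_drop' (xs := l) (by simp [List.length_drop] at hj; omega)]
      simp only [decide_eq_true_eq, not_lt]
      exact le_trans (sorted_getElem_le hs (Nat.le_add_right i j) _) hc
    have : l.countP (fun x => decide (v < x)) ≤ i := by
      conv_lhs => rw [← List.take_append_drop i l, List.countP_append]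
      rw [hdrop]
      have h2 := List.countP_le_length (l := l.take i) (p := fun x => decide (v < x))
      simp only [List.length_take] at h2
      omega
    omega
  · intro h
    have hlen : (l.take (i+1)).length = i + 1 := by simp [List.length_take]; omega
    have htake : (l.take (i+1)).countP (fun x => decide (v < x)) = i + 1 := by
      rw [List.countP_eq_length.mpr, hlen]
      intro a ha
      obtain ⟨j, hj, rfl⟩ := List.mem_iff_getElem.mp ha
      rw [List.getElem_take]
      have hji : j ≤ i := by rw [hlen] at hj; omega
      simp only [decide_eq_true_eq]
      exact lt_of_lt_of_le h (sorted_getElem_le hs hji hi)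
    have : (l.take (i+1)).countP (fun x => decide (v < x)) ≤ l.countP (fun x => decide (v < x)) := by
      conv_rhs => rw [← List.take_append_drop (i+1) l, List.countP_append]
      omega
    omega

@[simp] lemma conj_length (l : List ℕ) : (conj l).length = l.headI := by simp [conj]

lemma conj_getElem (l : List ℕ) {j : ℕ} (hj : j < (conj l).length) :
    (conj l)[j] = l.countP (fun x => decide (j < x)) := by
  simp [conj]

lemma conj_sorted (l : List ℕ) : (conj l).Pairwise (· ≥ ·) := by
  unfold conj
  rw [List.pairwise_map]
  exact (List.pairwise_lt_range (n := _)).imp (fun {a b} hab =>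
    List.countP_mono_left (fun x _ hx => by simp at hx ⊢; omega))

lemma conj_pos (l : List ℕ) : ∀ x ∈ conj l, 0 < x := by
  intro x hx
  simp only [conj, List.mem_map, List.mem_range] at hx
  obtain ⟨j, hj, rfl⟩ := hx
  rw [List.countP_pos_iff]
  refine ⟨l.headI, ?_, by simpa⟩
  cases l with
  | nil => simp at hj
  | cons a t => simp

lemma countP_range_lt (v h : ℕ) (hv : v ≤ h) :
    (List.range h).countP (fun j => decide (j < v)) = v := by
  induction h with
  | zero => simp; omega
  | succ h ih =>
    rw [List.range_succ, List.countP_append]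
    rcases Nat.lt_or_ge v (h+1) with hv' | hv'
    · have : v ≤ h := by omega
      rw [ih this]
      simp [Nat.not_lt.mpr this]
    · have hv2 : v = h + 1 := by omega
      subst hv2
      rw [List.countP_eq_length.mpr (fun a ha => by simp at ha ⊢; omega)]
      simp

lemma sum_ite_range (a h : ℕ) (ha : a ≤ h) :
    ((List.range h).map (fun j => if j < a then (1:ℕ) else 0)).sum = a := by
  induction h with
  | zero => simp; omega
  | succ h ih =>
    rw [List.range_succ, List.map_append, List.sum_append]
    rcases Nat.lt_or_ge a (h+1) with hv' | hv'
    · have h1 : a ≤ h := by omega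
      rw [ih h1]
      simp [Nat.not_lt.mpr h1]
    · have hv2 : a = h + 1 := by omega
      subst hv2
      rw [List.map_congr_left (fun j hj => if_pos (by simp at hj; omega))]
      simp [List.map_const']

lemma aux_sum (l : List ℕ) (h : ℕ) (hb : ∀ x ∈ l, x ≤ h) :
    ((List.range h).map (fun j => l.countP (fun x => decide (j < x)))).sum = l.sum := by
  induction l with
  | nil => simp
  | cons a t ih =>
    have hb' : ∀ x ∈ t, x ≤ h := fun x hx => hb x (List.mem_cons_of_mem _ hx)
    simp only [List.countP_cons, List.sum_cons]
    rw [List.sum_map_add, ih hb']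
    simp only [decide_eq_true_eq]
    rw [sum_ite_range a h (hb a (by simp))]
    omega

lemma conj_sum (l : List ℕ) (hs : l.Pairwise (· ≥ ·)) : (conj l).sum = l.sum := by
  unfold conj
  apply aux_sum
  intro x hx
  cases l with
  | nil => simp at hx
  | cons a t =>
    obtain ⟨i, hi, rfl⟩ := List.mem_iff_getElem.mp hx
    simpa using sorted_getElem_le hs (Nat.zero_le i) hi

lemma headI_eq_getElem_zero {l : List ℕ} (h : 0 < l.length) : l.headI = l[0] := by
  cases l with
  | nil => simp at h
  | cons a t => simp

lemma conj_headI {l : List ℕ} (hpos : ∀ x ∈ l, 0 < x) : (conj l).headI = l.length := by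
  cases l with
  | nil => simp [conj]
  | cons a t =>
    have ha : 0 < a := hpos a (by simp)
    have hlen : 0 < (conj (a :: t)).length := by simpa [conj] using ha
    rw [headI_eq_getElem_zero hlen, conj_getElem]
    exact List.countP_eq_length.mpr (fun x hx => by simpa using hpos x hx)

lemma conj_conj {l : List ℕ} (hs : l.Pairwise (· ≥ ·)) (hpos : ∀ x ∈ l, 0 < x) :
    conj (conj l) = l := by
  have hlen : (conj (conj l)).length = l.length := by
    rw [conj_length, conj_headI hpos]
  apply List.ext_getElem hlen
  intro i h1 h2
  rw [conj_getElem]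
  unfold conj
  rw [List.countP_map]
  have hstep : ∀ j ∈ List.range l.headI,
      ((fun x => decide (i < x)) ∘ (fun j => l.countP (fun x => decide (j < x)))) j = true
      ↔ (fun j => decide (j < l[i])) j = true := by
    intro j hj
    simp only [Function.comp, decide_eq_true_eq]
    exact lemK hs h2 j
  rw [List.countP_congr hstep]
  apply countP_range_lt
  calc l[i] ≤ l[0] := sorted_getElem_le hs (Nat.zero_le i) h2
  _ = l.headI := (headI_eq_getElem_zero (by omega)).symm

lemma fp_iff {l : List ℕ} (hs : l.Pairwise (· ≥ ·)) (hne : l ≠ [])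
    (k : ℕ) :
    HasKFixedPoint ((k : ℤ) - 1) l ↔
      (k ≤ (conj l).length ∧
        ∀ i : Fin (conj l).length, ((conj l).get i : ℤ) ≠ (i.val : ℤ) + 1 - k) := by
  have hlpos : 0 < l.length := List.length_pos_iff.mpr hne
  constructor
  · rintro ⟨i, hi⟩
    have hi0 : i.val < l.length := i.isLt
    have hnat : l[i.val] = i.val + k := by
      have : (l[i.val] : ℤ) = (i.val : ℤ) + k := by
        rw [← List.get_eq_getElem]; rw [hi]; ring
      exact_mod_cast this
    constructor
    · rw [conj_length, headI_eq_getElem_zero hlpos]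
      have := sorted_getElem_le hs (Nat.zero_le i.val) hi0
      omega
    · intro j hj
      set jv := j.val with hjv
      have hjlt : jv < l.headI := by rw [← conj_length l]; exact j.isLt
      rw [List.get_eq_getElem, conj_getElem] at hj
      set c := l.countP (fun x => decide (jv < x)) with hc
      have hcz : (c : ℤ) = (jv : ℤ) + 1 - k := hj
      have hkj : k ≤ jv + 1 := by omega
      have hcn : c + k = jv + 1 := by omega
      have hiff := lemK hs hi0 jv
      rw [hnat] at hiff
      by_cases hcase : i.val < c
      · have := hiff.mp hcase; omega
      · have : ¬ (jv < i.val + k) := fun hlt => hcase (hiff.mpr hlt)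
        omega
  · rintro ⟨hkle, hall⟩
    rw [conj_length, headI_eq_getElem_zero hlpos] at hkle
    by_contra hno
    have hno' : ∀ i (hi : i < l.length), l[i] ≠ i + k := by
      intro i hi he
      exact hno ⟨⟨i, hi⟩, by push_cast [List.get_eq_getElem, he]; ring⟩
    set S := (Finset.range l.length).filter (fun i => i + k ≤ l.getD i 0) with hS
    have h0S : 0 ∈ S := by
      rw [hS, Finset.mem_filter, Finset.mem_range]
      refine ⟨hlpos, ?_⟩
      rw [List.getD_eq_getElem _ _ hlpos]
      omega
    have hSne : S.Nonempty := ⟨0, h0S⟩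
    set m := S.max' hSne with hm
    have hmS : m ∈ S := S.max'_mem hSne
    rw [hS, Finset.mem_filter, Finset.mem_range] at hmS
    obtain ⟨hmlt, hmge⟩ := hmS
    rw [List.getD_eq_getElem _ _ hmlt] at hmge
    have hmgt : m + k + 1 ≤ l[m] := by
      have := hno' m hmlt
      omega
    set j := m + k with hj
    have hjlt : j < l.headI := by
      rw [headI_eq_getElem_zero hlpos]
      have := sorted_getElem_le hs (Nat.zero_le m) hmlt
      omega
    have hjlt' : j < (conj l).length := by rwa [conj_length]
    have hcj := hall ⟨j, hjlt'⟩
    rw [List.get_eq_getElem, conj_getElem] at hcj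
    set c := l.countP (fun x => decide (j < x)) with hc
    have hlow : m < c := (lemK hs hmlt j).mpr (by omega)
    have hhigh : c ≤ m + 1 := by
      by_contra hcon
      push_neg at hcon
      have hm1 : m + 1 < l.length := lt_of_lt_of_le hcon List.countP_le_length
      have := (lemK hs hm1 j).mp hcon
      have hmem : m + 1 ∈ S := by
        rw [hS, Finset.mem_filter, Finset.mem_range]
        refine ⟨hm1, ?_⟩
        rw [List.getD_eq_getElem _ _ hm1]
        omega
      have := S.le_max' (m+1) hmem
      omega
    have : c = m + 1 := by omega
    rw [this] at hcj
    apply hcj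
    push_cast
    omega

lemma part_finite (n : ℕ) : {l : List ℕ | IsPartitionOf n l}.Finite := by
  have h1 : {l : List (Fin (n+1)) | l.length ≤ n}.Finite := List.finite_length_le _ n
  apply Set.Finite.subset (h1.image (List.map Fin.val))
  rintro l ⟨hs, hpos, hsum⟩
  have hbd : ∀ x ∈ l, x ≤ n := by
    intro x hx
    calc x ≤ l.sum := List.le_sum_of_mem hx
    _ = n := hsum
  have hlen : l.length ≤ n := by
    calc l.length ≤ l.sum := List.length_le_sum_of_one_le l hpos
    _ = n := hsum
  refine ⟨l.map (fun x => (⟨min x n, by omega⟩ : Fin (n+1))), by simpa, ?_⟩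
  rw [List.map_map]
  calc l.map _ = l.map id := List.map_congr_left (fun x hx => by
        simp [Nat.min_eq_left (hbd x hx)])
  _ = l := List.map_id l

lemma part_nonnil {n : ℕ} (hn : 1 ≤ n) {l : List ℕ} (h : IsPartitionOf n l) : l ≠ [] := by
  rintro rfl
  simp only [IsPartitionOf, List.sum_nil] at h
  omega

theorem stmt19 (k : ℕ) (hk : 1 ≤ k) (n : ℕ) (hn : 2 ≤ n) :
    (gk ((k : ℤ) - 1) n : ℤ) - (fk ((k : ℤ) - 1) n : ℤ) =
      (fk (-(k : ℤ)) n : ℤ) + (pAtMost n ((k : ℤ) - 1) : ℤ) - (gneg k n : ℤ) := by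
  set P : Set (List ℕ) := {l | IsPartitionOf n l} with hP
  set F : Set (List ℕ) := {l | IsPartitionOf n l ∧ HasKFixedPoint ((k : ℤ) - 1) l} with hF
  set G : Set (List ℕ) := {l | IsPartitionOf n l ∧ ¬ HasKFixedPoint ((k : ℤ) - 1) l} with hG
  set A : Set (List ℕ) := {l | IsPartitionOf n l ∧ (l.length : ℤ) ≤ (k : ℤ) - 1} with hA
  set B : Set (List ℕ) := {l | IsPartitionOf n l ∧ HasKFixedPoint (-(k : ℤ)) l} with hB
  set C : Set (List ℕ) := {l | IsPartitionOf n l ∧ (k : ℕ) ≤ l.length ∧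
      ∀ i : Fin l.length, (l.get i : ℤ) ≠ (i.val : ℤ) + 1 - (k : ℤ)} with hC
  have hPfin : P.Finite := part_finite n
  have hFfin : F.Finite := hPfin.subset (fun l hl => hl.1)
  have hGfin : G.Finite := hPfin.subset (fun l hl => hl.1)
  have hAfin : A.Finite := hPfin.subset (fun l hl => hl.1)
  have hBfin : B.Finite := hPfin.subset (fun l hl => hl.1)
  have hCfin : C.Finite := hPfin.subset (fun l hl => hl.1)
  -- B forces many parts
  have hBlen : ∀ l ∈ B, (k : ℤ) ≤ (l.length : ℤ) - 1 := by
    rintro l ⟨hpart, i, hi⟩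
    have hpos : 0 < l.get i := hpart.2.1 _ (List.get_mem l i)
    have h1 : (1 : ℤ) ≤ (l.get i : ℤ) := by exact_mod_cast hpos
    have h2 : (i.val : ℤ) < (l.length : ℤ) := by exact_mod_cast i.isLt
    omega
  -- E1 : P = F ∪ G
  have e1 : P.ncard = F.ncard + G.ncard := by
    have hu : P = F ∪ G := by
      ext l
      simp only [hP, hF, hG, Set.mem_setOf_eq, Set.mem_union]
      tauto
    rw [hu, Set.ncard_union_eq ?_ hFfin hGfin]
    rw [Set.disjoint_left]
    rintro l ⟨_, h1⟩ ⟨_, h2⟩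
    exact h2 h1
  -- E2 : P = A ∪ B ∪ C
  have e2 : P.ncard = A.ncard + (B.ncard + C.ncard) := by
    have hu : P = A ∪ (B ∪ C) := by
      ext l
      simp only [hP, hA, hB, hC, Set.mem_setOf_eq, Set.mem_union]
      constructor
      · intro hl
        by_cases hlen : (l.length : ℤ) ≤ (k : ℤ) - 1
        · exact Or.inl ⟨hl, hlen⟩
        · push_neg at hlen
          by_cases hfp : HasKFixedPoint (-(k : ℤ)) l
          · exact Or.inr (Or.inl ⟨hl, hfp⟩)
          · refine Or.inr (Or.inr ⟨hl, by exact_mod_cast (by omega : (k:ℤ) ≤ (l.length:ℤ)), ?_⟩)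
            intro i hi
            exact hfp ⟨i, by rw [hi]; ring⟩
      · rintro (h | h | h) <;> exact h.1
    have hd1 : Disjoint A (B ∪ C) := by
      rw [Set.disjoint_left]
      rintro l ⟨_, hlen⟩ (hb | hc)
      · have := hBlen l hb; omega
      · have := hc.2.1
        have : (k : ℤ) ≤ (l.length : ℤ) := by exact_mod_cast this
        omega
    have hd2 : Disjoint B C := by
      rw [Set.disjoint_left]
      rintro l ⟨_, i, hi⟩ ⟨_, _, hall⟩
      exact hall i (by rw [hi]; ring)
    rw [hu, Set.ncard_union_eq hd1 hAfin (hBfin.union hCfin),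
      Set.ncard_union_eq hd2 hBfin hCfin]
  -- E3 : F ≃ C via conjugation
  have e3 : F.ncard = C.ncard := by
    have himg : conj '' F = C := by
      ext m
      constructor
      · rintro ⟨l, ⟨⟨hs, hpos, hsum⟩, hfp⟩, rfl⟩
        have hne : l ≠ [] := part_nonnil (by omega) ⟨hs, hpos, hsum⟩
        obtain ⟨h1, h2⟩ := (fp_iff hs hne k).mp hfp
        exact ⟨⟨conj_sorted l, conj_pos l, by rw [conj_sum l hs]; exact hsum⟩, h1, h2⟩
      · rintro ⟨⟨hs, hpos, hsum⟩, hklen, hall⟩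
        have hmne : m ≠ [] := part_nonnil (by omega) ⟨hs, hpos, hsum⟩
        have hcne : conj m ≠ [] := by
          have : (conj m).length ≠ 0 := by
            rw [conj_length]
            cases m with
            | nil => exact absurd rfl hmne
            | cons a t => have := hpos a (by simp); simpa using this.ne'
          exact fun h => this (by rw [h]; rfl)
        have hpart : IsPartitionOf n (conj m) :=
          ⟨conj_sorted m, conj_pos m, by rw [conj_sum m hs]; exact hsum⟩
        refine ⟨conj m, ⟨hpart, ?_⟩, conj_conj hs hpos⟩
        rw [fp_iff (conj_sorted m) hcne k]
        rw [conj_conj hs hpos]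
        exact ⟨hklen, hall⟩
    have hinj : Set.InjOn conj F := by
      rintro a ⟨⟨hsa, hpa, _⟩, _⟩ b ⟨⟨hsb, hpb, _⟩, _⟩ hab
      calc a = conj (conj a) := (conj_conj hsa hpa).symm
      _ = conj (conj b) := by rw [hab]
      _ = b := conj_conj hsb hpb
    rw [← himg, Set.ncard_image_of_injOn hinj]
  -- assemble
  have hfk : fk ((k : ℤ) - 1) n = F.ncard := rfl
  have hgk : gk ((k : ℤ) - 1) n = G.ncard := rfl
  have hfkn : fk (-(k : ℤ)) n = B.ncard := rfl
  have hpa : pAtMost n ((k : ℤ) - 1) = A.ncard := rfl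
  have hgn : gneg k n = C.ncard := rfl
  rw [hfk, hgk, hfkn, hpa, hgn]
  omega
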